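/- Let t > 0 and let (r(n)) be a sequence of nonnegative integers with r(n)/√n → t as n → ∞. Place r = r(n) distinguishable rooks independently and uniformly at random on B_n. Then the expected numbers of alignments satisfy E(W_RC + W_CR) → (2/3)t² and E(W_RR + W_RC + W_CR) → (4/3)t² as n → ∞. -/

import Mathlib

open Finset Filter

/-- The triangular board `B_n = {(i,j) : 1 ≤ i < j ≤ n}`. -/
def board (n : ℕ) : Finset (ℕ × ℕ) :=
  (Finset.range (n + 1) ×ˢ Finset.range (n + 1)).filter fun p => 1 ≤ p.1 ∧ p.1 < p.2

/-- Expectation of an `ℕ`-valued statistic of a uniform random placement of `r` rooks on `B_n`;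
a placement is a function `Fin r → ℕ × ℕ`, rook `a` sitting on the square `f a = (row, column)`. -/
noncomputable def rookExp (n r : ℕ) (W : (Fin r → ℕ × ℕ) → ℕ) : ℝ :=
  (∑ f ∈ Fintype.piFinset (fun _ : Fin r => board n), (W f : ℝ)) / ((board n).card : ℝ) ^ r

/-- Number of (unordered) pairs of rooks lying in the same row. -/
def WRR (r : ℕ) (f : Fin r → ℕ × ℕ) : ℕ :=
  (Finset.univ.filter fun p : Fin r × Fin r => p.1 < p.2 ∧ (f p.1).1 = (f p.2).1).card

/-- Number of ordered pairs `a < b` with the column of rook `a` equal to the row of rook `b`. -/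
def WRC (r : ℕ) (f : Fin r → ℕ × ℕ) : ℕ :=
  (Finset.univ.filter fun p : Fin r × Fin r => p.1 < p.2 ∧ (f p.1).2 = (f p.2).1).card

/-- Number of ordered pairs `a < b` with the row of rook `a` equal to the column of rook `b`. -/
def WCR (r : ℕ) (f : Fin r → ℕ × ℕ) : ℕ :=
  (Finset.univ.filter fun p : Fin r × Fin r => p.1 < p.2 ∧ (f p.1).1 = (f p.2).2).card

lemma mem_board {n : ℕ} {p : ℕ × ℕ} : p ∈ board n ↔ 1 ≤ p.1 ∧ p.1 < p.2 ∧ p.2 ≤ n := by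
  simp only [board, Finset.mem_filter, Finset.mem_product, Finset.mem_range]
  omega

lemma board_succ (n : ℕ) :
    board (n+1) = board n ∪ (Finset.Ico 1 (n+1)) ×ˢ {n+1} := by
  ext p
  simp only [mem_board, Finset.mem_union, Finset.mem_product, Finset.mem_Ico,
    Finset.mem_singleton]
  omega

lemma board_disj (n : ℕ) : Disjoint (board n) ((Finset.Ico 1 (n+1)) ×ˢ {n+1}) := by
  rw [Finset.disjoint_left]
  intro p hp hp2
  rw [mem_board] at hp
  simp only [Finset.mem_product, Finset.mem_Ico, Finset.mem_singleton] at hp2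
  omega

lemma board_cardR (n : ℕ) : ((board n).card : ℝ) = n * (n-1) / 2 := by
  induction n with
  | zero =>
    have : board 0 = ∅ := by ext p; rw [mem_board]; simp; omega
    simp [this]
  | succ n ih =>
    rw [board_succ, Finset.card_union_of_disjoint (board_disj n)]
    have h : ((Finset.Ico 1 (n+1)) ×ˢ ({n+1} : Finset ℕ)).card = n := by
      simp [Nat.card_Ico]
    rw [h]
    push_cast
    rw [ih]
    push_cast
    ring


section X
variable {r : ℕ} {s : Finset (ℕ × ℕ)}

lemma delta_sum {a b : Fin r} (hab : a ≠ b)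
    {x y : ℕ × ℕ} (hx : x ∈ s) (hy : y ∈ s) :
    ∑ f ∈ Fintype.piFinset (fun _ : Fin r => s),
      ((if f a = x then (1:ℝ) else 0) * (if f b = y then 1 else 0))
      = (s.card : ℝ) ^ (r - 2) := by
  classical
  set H : Fin r → (ℕ × ℕ) → ℝ :=
    Function.update (Function.update (fun _ _ => (1:ℝ)) a (fun z => if z = x then 1 else 0)) b
      (fun z => if z = y then 1 else 0) with hH
  have ha : H a = fun z => if z = x then (1:ℝ) else 0 := by
    rw [hH, Function.update_of_ne hab, Function.update_self]
  have hb : H b = fun z => if z = y then (1:ℝ) else 0 := by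
    rw [hH, Function.update_self]
  have hi : ∀ i : Fin r, i ≠ a → i ≠ b → H i = fun _ => (1:ℝ) := by
    intro i hia hib
    rw [hH, Function.update_of_ne hib, Function.update_of_ne hia]
  have key : ∀ f : Fin r → ℕ × ℕ,
      ((if f a = x then (1:ℝ) else 0) * (if f b = y then 1 else 0)) = ∏ i, H i (f i) := by
    intro f
    rw [← Finset.mul_prod_erase Finset.univ (fun i => H i (f i)) (Finset.mem_univ a),
      ← Finset.mul_prod_erase _ (fun i => H i (f i))
        (Finset.mem_erase.2 ⟨hab.symm, Finset.mem_univ b⟩)]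
    have h3 : ∏ i ∈ (Finset.univ.erase a).erase b, H i (f i) = 1 := by
      apply Finset.prod_eq_one
      intro i hi2
      simp only [Finset.mem_erase] at hi2
      rw [hi i hi2.2.1 hi2.1]
    rw [h3, ha, hb]
    ring
  calc ∑ f ∈ Fintype.piFinset (fun _ : Fin r => s),
        ((if f a = x then (1:ℝ) else 0) * (if f b = y then 1 else 0))
      = ∑ f ∈ Fintype.piFinset (fun _ : Fin r => s), ∏ i, H i (f i) :=
        Finset.sum_congr rfl fun f _ => key f
    _ = ∏ i, ∑ z ∈ s, H i z := (Finset.prod_univ_sum _ _).symm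
    _ = (s.card : ℝ) ^ (r - 2) := by
        rw [← Finset.mul_prod_erase Finset.univ (fun i => ∑ z ∈ s, H i z) (Finset.mem_univ a),
          ← Finset.mul_prod_erase _ (fun i => ∑ z ∈ s, H i z)
            (Finset.mem_erase.2 ⟨hab.symm, Finset.mem_univ b⟩)]
        have e1 : ∑ z ∈ s, H a z = 1 := by rw [ha]; simp [Finset.sum_ite_eq' s x, hx]
        have e2 : ∑ z ∈ s, H b z = 1 := by rw [hb]; simp [Finset.sum_ite_eq' s y, hy]
        have e3 : ∏ i ∈ (Finset.univ.erase a).erase b, (∑ z ∈ s, H i z)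
            = (s.card : ℝ) ^ (r - 2) := by
          have : ∀ i ∈ (Finset.univ.erase a).erase b, (∑ z ∈ s, H i z) = (s.card : ℝ) := by
            intro i hi2
            simp only [Finset.mem_erase] at hi2
            rw [hi i hi2.2.1 hi2.1]
            simp
          rw [Finset.prod_congr rfl this, Finset.prod_const]
          congr 1
          rw [Finset.card_erase_of_mem (Finset.mem_erase.2 ⟨hab.symm, Finset.mem_univ b⟩),
            Finset.card_erase_of_mem (Finset.mem_univ a)]
          simp only [Finset.card_univ, Fintype.card_fin]
          omega
        rw [e1, e2, e3]
        ring
  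
lemma pair_sum {a b : Fin r} (hab : a ≠ b) (g : ℕ × ℕ → ℕ × ℕ → ℝ) :
    ∑ f ∈ Fintype.piFinset (fun _ : Fin r => s), g (f a) (f b)
      = (s.card : ℝ) ^ (r - 2) * ∑ x ∈ s, ∑ y ∈ s, g x y := by
  classical
  have key : ∀ f ∈ Fintype.piFinset (fun _ : Fin r => s),
      g (f a) (f b) = ∑ x ∈ s, ∑ y ∈ s,
        ((if f a = x then (1:ℝ) else 0) * (if f b = y then 1 else 0)) * g x y := by
    intro f hf
    have hfa : f a ∈ s := by
      have := Fintype.mem_piFinset.mp hf a; simpa using this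
    have hfb : f b ∈ s := by
      have := Fintype.mem_piFinset.mp hf b; simpa using this
    have e1 : ∀ x : ℕ × ℕ, ∑ y ∈ s,
        ((if f a = x then (1:ℝ) else 0) * (if f b = y then 1 else 0)) * g x y
        = (if f a = x then (1:ℝ) else 0) * g x (f b) := by
      intro x
      have : ∀ y ∈ s, ((if f a = x then (1:ℝ) else 0) * (if f b = y then 1 else 0)) * g x y
          = (if f a = x then (1:ℝ) else 0) * (if f b = y then g x y else 0) := by
        intro y _
        by_cases h1 : f a = x <;> by_cases h2 : f b = y <;> simp [h1, h2]
      rw [Finset.sum_congr rfl this, ← Finset.mul_sum, Finset.sum_ite_eq s (f b), if_pos hfb]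
    rw [Finset.sum_congr rfl fun x _ => e1 x]
    have : ∀ x ∈ s, (if f a = x then (1:ℝ) else 0) * g x (f b)
        = (if f a = x then g x (f b) else 0) := by
      intro x _; by_cases h1 : f a = x <;> simp [h1]
    rw [Finset.sum_congr rfl this, Finset.sum_ite_eq s (f a), if_pos hfa]
  rw [Finset.sum_congr rfl key, Finset.sum_comm]
  rw [Finset.sum_congr rfl (fun x _ => Finset.sum_comm), Finset.mul_sum]
  apply Finset.sum_congr rfl
  intro x hx
  rw [Finset.mul_sum]
  apply Finset.sum_congr rfl
  intro y hy
  rw [← Finset.sum_mul, delta_sum hab hx hy]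

end X

lemma board_sumRC (n : ℕ) :
    ∑ x ∈ board n, ∑ y ∈ board n, (if x.2 = y.1 then (1:ℝ) else 0)
      = n * (n-1) * (n-2) / 6 := by
  induction n with
  | zero =>
    have : board 0 = ∅ := by ext p; rw [mem_board]; simp; omega
    simp [this]
  | succ n ih =>
    have hnew : ∀ x : ℕ × ℕ, x ∈ board n → x.2 ∈ Finset.Ico 1 (n+1) := by
      intro x hx; rw [mem_board] at hx; rw [Finset.mem_Ico]; omega
    rw [board_succ, Finset.sum_union (board_disj n)]
    have T1 : ∑ x ∈ board n, ∑ y ∈ board n ∪ (Finset.Ico 1 (n+1)) ×ˢ {n+1},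
        (if x.2 = y.1 then (1:ℝ) else 0)
        = ∑ x ∈ board n, ((∑ y ∈ board n, (if x.2 = y.1 then (1:ℝ) else 0)) + 1) := by
      apply Finset.sum_congr rfl
      intro x hx
      rw [Finset.sum_union (board_disj n)]
      congr 1
      rw [Finset.sum_product]
      simp only [Finset.sum_singleton]
      rw [Finset.sum_ite_eq (Finset.Ico 1 (n+1)) x.2 (fun _ => (1:ℝ)), if_pos (hnew x hx)]
    have T2 : ∑ x ∈ (Finset.Ico 1 (n+1)) ×ˢ {n+1},
        ∑ y ∈ board n ∪ (Finset.Ico 1 (n+1)) ×ˢ {n+1}, (if x.2 = y.1 then (1:ℝ) else 0)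
        = 0 := by
      apply Finset.sum_eq_zero
      intro x hx
      simp only [Finset.mem_product, Finset.mem_Ico, Finset.mem_singleton] at hx
      apply Finset.sum_eq_zero
      intro y hy
      rw [Finset.mem_union] at hy
      rcases hy with hy | hy
      · rw [mem_board] at hy
        rw [if_neg]; omega
      · simp only [Finset.mem_product, Finset.mem_Ico, Finset.mem_singleton] at hy
        rw [if_neg]; omega
    rw [T1, T2, Finset.sum_add_distrib, ih, Finset.sum_const, nsmul_eq_mul]
    rw [show ((board n).card : ℝ) = n * (n-1) / 2 from board_cardR n]
    push_cast
    ring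

lemma board_sumRR (n : ℕ) :
    ∑ x ∈ board n, ∑ y ∈ board n, (if x.1 = y.1 then (1:ℝ) else 0)
      = n * (n-1) * (2*n-1) / 6 := by
  induction n with
  | zero =>
    have : board 0 = ∅ := by ext p; rw [mem_board]; simp; omega
    simp [this]
  | succ n ih =>
    have hrow : ∀ x : ℕ × ℕ, x ∈ board n → x.1 ∈ Finset.Ico 1 (n+1) := by
      intro x hx; rw [mem_board] at hx; rw [Finset.mem_Ico]; omega
    rw [board_succ, Finset.sum_union (board_disj n)]
    have T1 : ∑ x ∈ board n, ∑ y ∈ board n ∪ (Finset.Ico 1 (n+1)) ×ˢ {n+1},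
        (if x.1 = y.1 then (1:ℝ) else 0)
        = ∑ x ∈ board n, ((∑ y ∈ board n, (if x.1 = y.1 then (1:ℝ) else 0)) + 1) := by
      apply Finset.sum_congr rfl
      intro x hx
      rw [Finset.sum_union (board_disj n)]
      congr 1
      rw [Finset.sum_product]
      simp only [Finset.sum_singleton]
      rw [Finset.sum_ite_eq (Finset.Ico 1 (n+1)) x.1 (fun _ => (1:ℝ)), if_pos (hrow x hx)]
    have T2 : ∑ x ∈ (Finset.Ico 1 (n+1)) ×ˢ {n+1},
        ∑ y ∈ board n ∪ (Finset.Ico 1 (n+1)) ×ˢ {n+1}, (if x.1 = y.1 then (1:ℝ) else 0)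
        = ∑ x ∈ (Finset.Ico 1 (n+1)) ×ˢ {n+1},
            ((∑ y ∈ board n, (if x.1 = y.1 then (1:ℝ) else 0)) + 1) := by
      apply Finset.sum_congr rfl
      intro x hx
      simp only [Finset.mem_product, Finset.mem_Ico, Finset.mem_singleton] at hx
      rw [Finset.sum_union (board_disj n)]
      congr 1
      rw [Finset.sum_product]
      simp only [Finset.sum_singleton]
      rw [Finset.sum_ite_eq (Finset.Ico 1 (n+1)) x.1 (fun _ => (1:ℝ)), if_pos]
      rw [Finset.mem_Ico]; omega
    have T3 : ∑ x ∈ (Finset.Ico 1 (n+1)) ×ˢ {n+1},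
        ∑ y ∈ board n, (if x.1 = y.1 then (1:ℝ) else 0)
        = ∑ x ∈ board n, ∑ y ∈ (Finset.Ico 1 (n+1)) ×ˢ {n+1},
            (if x.1 = y.1 then (1:ℝ) else 0) := by
      rw [Finset.sum_comm]
      apply Finset.sum_congr rfl
      intro y _
      apply Finset.sum_congr rfl
      intro x _
      by_cases h : x.1 = y.1
      · rw [if_pos h, if_pos h.symm]
      · rw [if_neg h, if_neg (fun hh => h hh.symm)]
    have T4 : ∑ x ∈ board n, ∑ y ∈ (Finset.Ico 1 (n+1)) ×ˢ {n+1},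
        (if x.1 = y.1 then (1:ℝ) else 0) = ∑ x ∈ board n, (1:ℝ) := by
      apply Finset.sum_congr rfl
      intro x hx
      rw [Finset.sum_product]
      simp only [Finset.sum_singleton]
      rw [Finset.sum_ite_eq (Finset.Ico 1 (n+1)) x.1 (fun _ => (1:ℝ)), if_pos (hrow x hx)]
    rw [T1, T2, Finset.sum_add_distrib, Finset.sum_add_distrib, ih, T3, T4]
    simp only [Finset.sum_const, nsmul_eq_mul, mul_one]
    rw [show ((board n).card : ℝ) = n * (n-1) / 2 from board_cardR n]
    have hc : ((Finset.Ico 1 (n+1)) ×ˢ ({n+1} : Finset ℕ)).card = n := by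
      simp [Nat.card_Ico]
    rw [hc]
    push_cast
    ring


lemma split_card (r : ℕ) (f : Fin r → ℕ × ℕ) (C : ℕ × ℕ → ℕ × ℕ → Prop)
    [DecidablePred fun p : Fin r × Fin r => C (f p.1) (f p.2)]
    [DecidablePred fun p : Fin r × Fin r => C (f p.2) (f p.1)] :
    ((Finset.univ : Finset (Fin r)).offDiag.filter fun p => C (f p.1) (f p.2)).card
      = (Finset.univ.filter fun p : Fin r × Fin r => p.1 < p.2 ∧ C (f p.1) (f p.2)).card
        + (Finset.univ.filter fun p : Fin r × Fin r => p.1 < p.2 ∧ C (f p.2) (f p.1)).card := by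
  classical
  have hsplit : ((Finset.univ : Finset (Fin r)).offDiag.filter fun p => C (f p.1) (f p.2))
      = (Finset.univ.filter fun p : Fin r × Fin r => p.1 < p.2 ∧ C (f p.1) (f p.2))
        ∪ (Finset.univ.filter fun p : Fin r × Fin r => p.2 < p.1 ∧ C (f p.1) (f p.2)) := by
    ext p
    simp only [Finset.mem_filter, Finset.mem_offDiag, Finset.mem_univ, true_and,
      Finset.mem_union]
    constructor
    · rintro ⟨hne, hc⟩
      rcases lt_or_gt_of_ne hne with h | h
      · exact Or.inl ⟨h, hc⟩
      · exact Or.inr ⟨h, hc⟩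
    · rintro (⟨h, hc⟩ | ⟨h, hc⟩)
      · exact ⟨ne_of_lt h, hc⟩
      · exact ⟨ne_of_gt h, hc⟩
  have hdisj : Disjoint
      (Finset.univ.filter fun p : Fin r × Fin r => p.1 < p.2 ∧ C (f p.1) (f p.2))
      (Finset.univ.filter fun p : Fin r × Fin r => p.2 < p.1 ∧ C (f p.1) (f p.2)) := by
    rw [Finset.disjoint_left]
    intro p hp hq
    simp only [Finset.mem_filter] at hp hq
    exact absurd hq.2.1 (not_lt.2 (le_of_lt hp.2.1))
  have hswap : (Finset.univ.filter fun p : Fin r × Fin r => p.2 < p.1 ∧ C (f p.1) (f p.2)).card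
      = (Finset.univ.filter fun p : Fin r × Fin r => p.1 < p.2 ∧ C (f p.2) (f p.1)).card := by
    apply Finset.card_nbij' Prod.swap Prod.swap
    · intro p hp
      simp only [Finset.mem_coe, Finset.mem_filter, Finset.mem_univ, true_and] at hp ⊢
      exact ⟨hp.1, hp.2⟩
    · intro p hp
      simp only [Finset.mem_coe, Finset.mem_filter, Finset.mem_univ, true_and] at hp ⊢
      exact ⟨hp.1, hp.2⟩
    · intro p _; rfl
    · intro p _; rfl
  rw [hsplit, Finset.card_union_of_disjoint hdisj, hswap]

lemma wrcwcr (r : ℕ) (f : Fin r → ℕ × ℕ) :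
    ((WRC r f + WCR r f : ℕ) : ℝ)
      = ∑ p ∈ (Finset.univ : Finset (Fin r)).offDiag,
          (if (f p.1).2 = (f p.2).1 then (1:ℝ) else 0) := by
  classical
  rw [Finset.sum_boole]
  norm_cast
  rw [split_card r f (fun x y => x.2 = y.1)]
  congr 1
  unfold WCR
  congr 1
  ext p
  simp only [Finset.mem_filter, Finset.mem_univ, true_and]
  constructor
  · rintro ⟨h, hc⟩; exact ⟨h, hc.symm⟩
  · rintro ⟨h, hc⟩; exact ⟨h, hc.symm⟩

lemma wrr (r : ℕ) (f : Fin r → ℕ × ℕ) :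
    ((WRR r f : ℕ) : ℝ)
      = (1/2) * ∑ p ∈ (Finset.univ : Finset (Fin r)).offDiag,
          (if (f p.1).1 = (f p.2).1 then (1:ℝ) else 0) := by
  classical
  rw [Finset.sum_boole]
  rw [split_card r f (fun x y => x.1 = y.1)]
  have : (Finset.univ.filter fun p : Fin r × Fin r => p.1 < p.2 ∧ (f p.2).1 = (f p.1).1).card
      = WRR r f := by
    unfold WRR
    congr 1
    ext p
    simp only [Finset.mem_filter, Finset.mem_univ, true_and]
    constructor
    · rintro ⟨h, hc⟩; exact ⟨h, hc.symm⟩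
    · rintro ⟨h, hc⟩; exact ⟨h, hc.symm⟩
  rw [this]
  unfold WRR
  push_cast
  ring

lemma exp_sum (n r : ℕ) (hr : 2 ≤ r) (hN : ((board n).card : ℝ) ≠ 0)
    (g : ℕ × ℕ → ℕ × ℕ → ℝ) :
    (∑ f ∈ Fintype.piFinset (fun _ : Fin r => board n),
        ∑ p ∈ (Finset.univ : Finset (Fin r)).offDiag, g (f p.1) (f p.2))
      / ((board n).card : ℝ) ^ r
    = ((r:ℝ)^2 - r) * (∑ x ∈ board n, ∑ y ∈ board n, g x y) / ((board n).card : ℝ)^2 := by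
  classical
  rw [Finset.sum_comm]
  have h1 : ∀ p ∈ (Finset.univ : Finset (Fin r)).offDiag,
      ∑ f ∈ Fintype.piFinset (fun _ : Fin r => board n), g (f p.1) (f p.2)
      = ((board n).card : ℝ) ^ (r - 2) * ∑ x ∈ board n, ∑ y ∈ board n, g x y := by
    intro p hp
    rw [Finset.mem_offDiag] at hp
    exact pair_sum hp.2.2 g
  rw [Finset.sum_congr rfl h1, Finset.sum_const, Finset.offDiag_card, Finset.card_univ,
    Fintype.card_fin, nsmul_eq_mul]
  have hcast : ((r * r - r : ℕ) : ℝ) = (r:ℝ)^2 - r := by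
    have : r ≤ r * r := Nat.le_mul_of_pos_left r (by omega)
    push_cast [this]
    ring
  rw [hcast]
  have hpow : ((board n).card : ℝ) ^ r = ((board n).card : ℝ) ^ (r - 2) * ((board n).card : ℝ)^2 := by
    rw [← pow_add]
    congr 1
    omega
  rw [hpow]
  have h2 : ((board n).card : ℝ) ^ (r - 2) ≠ 0 := pow_ne_zero _ hN
  field_simp

lemma hNval {n : ℕ} (hn : 2 ≤ n) : ((board n).card : ℝ) = n * (n-1) / 2 := board_cardR n

lemma hNne {n : ℕ} (hn : 2 ≤ n) : ((board n).card : ℝ) ≠ 0 := by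
  rw [board_cardR n]
  have h2 : (2:ℝ) ≤ (n:ℝ) := by exact_mod_cast hn
  have h3 : (0:ℝ) < (n:ℝ) * ((n:ℝ)-1) / 2 := by nlinarith
  exact ne_of_gt h3

lemma exp_formula1 {n r : ℕ} (hn : 2 ≤ n) (hr : 2 ≤ r) :
    rookExp n r (fun f => WRC r f + WCR r f)
      = (2/3) * (((r:ℝ)^2 - r) / n) * (((n:ℝ) - 2) / ((n:ℝ) - 1)) := by
  unfold rookExp
  have h1 : ∀ f ∈ Fintype.piFinset (fun _ : Fin r => board n),
      ((WRC r f + WCR r f : ℕ) : ℝ)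
      = ∑ p ∈ (Finset.univ : Finset (Fin r)).offDiag,
          (if (f p.1).2 = (f p.2).1 then (1:ℝ) else 0) := fun f _ => wrcwcr r f
  rw [Finset.sum_congr rfl h1, exp_sum n r hr (hNne hn) (fun x y => if x.2 = y.1 then (1:ℝ) else 0), board_sumRC n, hNval hn]
  have hn0 : (n:ℝ) ≠ 0 := by
    have : (2:ℝ) ≤ (n:ℝ) := by exact_mod_cast hn
    linarith
  have hn1 : (n:ℝ) - 1 ≠ 0 := by
    have : (2:ℝ) ≤ (n:ℝ) := by exact_mod_cast hn
    linarith
  field_simp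
  ring

lemma exp_formula2 {n r : ℕ} (hn : 2 ≤ n) (hr : 2 ≤ r) :
    rookExp n r (fun f => WRR r f + WRC r f + WCR r f)
      = (2/3) * (((r:ℝ)^2 - r) / n) * (((n:ℝ) - 2) / ((n:ℝ) - 1))
        + (1/3) * (((r:ℝ)^2 - r) / n) * ((2*(n:ℝ) - 1) / ((n:ℝ) - 1)) := by
  unfold rookExp
  have h1 : ∀ f ∈ Fintype.piFinset (fun _ : Fin r => board n),
      ((WRR r f + WRC r f + WCR r f : ℕ) : ℝ)
      = ∑ p ∈ (Finset.univ : Finset (Fin r)).offDiag,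
          ((1/2) * (if (f p.1).1 = (f p.2).1 then (1:ℝ) else 0)
            + (if (f p.1).2 = (f p.2).1 then (1:ℝ) else 0)) := by
    intro f _
    rw [Finset.sum_add_distrib, ← Finset.mul_sum, ← wrcwcr r f]
    have := wrr r f
    push_cast
    push_cast at this
    rw [this]
    ring
  rw [Finset.sum_congr rfl h1,
    exp_sum n r hr (hNne hn)
      (fun x y => (1/2) * (if x.1 = y.1 then (1:ℝ) else 0) + (if x.2 = y.1 then (1:ℝ) else 0))]
  have hsum : ∑ x ∈ board n, ∑ y ∈ board n,
      ((1/2) * (if x.1 = y.1 then (1:ℝ) else 0) + (if x.2 = y.1 then (1:ℝ) else 0))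
      = (1/2) * ((n:ℝ) * ((n:ℝ)-1) * (2*(n:ℝ)-1) / 6) + (n:ℝ) * ((n:ℝ)-1) * ((n:ℝ)-2) / 6 := by
    rw [← board_sumRR n, ← board_sumRC n]
    rw [Finset.mul_sum, ← Finset.sum_add_distrib]
    apply Finset.sum_congr rfl
    intro x _
    rw [Finset.mul_sum, ← Finset.sum_add_distrib]
  rw [hsum, hNval hn]
  have hn0 : (n:ℝ) ≠ 0 := by
    have : (2:ℝ) ≤ (n:ℝ) := by exact_mod_cast hn
    linarith
  have hn1 : (n:ℝ) - 1 ≠ 0 := by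
    have : (2:ℝ) ≤ (n:ℝ) := by exact_mod_cast hn
    linarith
  field_simp
  ring

set_option maxHeartbeats 1600000 in
/-- if `r(n)/√n → t > 0` and `r(n)` rooks are placed independently and uniformly
at random on `B_n`, then the expected numbers of alignments satisfy
`E(W_RC + W_CR) → (2/3)t²` and `E(W_RR + W_RC + W_CR) → (4/3)t²` as `n → ∞`. -/
theorem expected_alignments_limits (t : ℝ) (ht : 0 < t) (r : ℕ → ℕ)
    (hlim : Tendsto (fun n : ℕ => (r n : ℝ) / Real.sqrt n) atTop (nhds t)) :
    Tendsto (fun n : ℕ => rookExp n (r n) (fun f => WRC (r n) f + WCR (r n) f))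
        atTop (nhds ((2/3) * t ^ 2)) ∧
    Tendsto (fun n : ℕ => rookExp n (r n) (fun f => WRR (r n) f + WRC (r n) f + WCR (r n) f))
        atTop (nhds ((4/3) * t ^ 2)) := by
  have hsq : Tendsto (fun n : ℕ => Real.sqrt n) atTop atTop := by
    rw [tendsto_atTop_atTop]
    intro b
    refine ⟨⌈b⌉₊ ^ 2, fun n hn => ?_⟩
    have h1 : ((⌈b⌉₊:ℝ))^2 ≤ (n:ℝ) := by exact_mod_cast hn
    calc b ≤ (⌈b⌉₊:ℝ) := Nat.le_ceil b
      _ = Real.sqrt ((⌈b⌉₊:ℝ)^2) := (Real.sqrt_sq (by positivity)).symm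
      _ ≤ Real.sqrt n := Real.sqrt_le_sqrt h1
  have hinvsq : Tendsto (fun n : ℕ => (Real.sqrt n)⁻¹) atTop (nhds 0) :=
    hsq.inv_tendsto_atTop
  have hrtop : Tendsto (fun n : ℕ => (r n : ℝ)) atTop atTop := by
    refine (Tendsto.pos_mul_atTop ht hlim hsq).congr' ?_
    filter_upwards [eventually_ge_atTop 1] with n hn
    have hpos : (0:ℝ) < Real.sqrt n := Real.sqrt_pos.2 (by exact_mod_cast Nat.lt_of_lt_of_le Nat.zero_lt_one hn)
    field_simp
  have hr2 : ∀ᶠ n in atTop, 2 ≤ r n := by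
    filter_upwards [hrtop.eventually_ge_atTop 2] with n hn
    exact_mod_cast hn
  have hu : Tendsto (fun n : ℕ => ((r n : ℝ)^2 - r n) / n) atTop (nhds (t^2)) := by
    have h1 : Tendsto (fun n : ℕ =>
        ((r n : ℝ)/Real.sqrt n) * ((r n : ℝ)/Real.sqrt n)
          - ((r n : ℝ)/Real.sqrt n) * (Real.sqrt n)⁻¹) atTop (nhds (t*t - t*0)) :=
      (hlim.mul hlim).sub (hlim.mul hinvsq)
    rw [show t*t - t*0 = t^2 by ring] at h1
    refine h1.congr' ?_
    filter_upwards [eventually_ge_atTop 1] with n hn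
    have hpos : (0:ℝ) < Real.sqrt n := Real.sqrt_pos.2 (by exact_mod_cast Nat.lt_of_lt_of_le Nat.zero_lt_one hn)
    have hs : Real.sqrt n * Real.sqrt n = (n:ℝ) := Real.mul_self_sqrt (by positivity)
    rw [div_mul_div_comm, hs, ← div_eq_mul_inv, div_div, hs, ← sq, div_sub_div_same]
  have hnn : Tendsto (fun n : ℕ => (n:ℝ) - 1) atTop atTop := by
    refine (tendsto_atTop_add_const_right atTop (-1) tendsto_natCast_atTop_atTop).congr ?_
    intro n; ring
  have hinv1 : Tendsto (fun n : ℕ => ((n:ℝ) - 1)⁻¹) atTop (nhds 0) :=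
    hnn.inv_tendsto_atTop
  have hv : Tendsto (fun n : ℕ => ((n:ℝ) - 2)/((n:ℝ) - 1)) atTop (nhds 1) := by
    have h2 : Tendsto (fun n : ℕ => 1 - ((n:ℝ)-1)⁻¹) atTop (nhds (1 - 0)) :=
      tendsto_const_nhds.sub hinv1
    rw [sub_zero] at h2
    refine h2.congr' ?_
    filter_upwards [eventually_ge_atTop 2] with n hn
    have h1 : (n:ℝ) - 1 ≠ 0 := by
      have : (2:ℝ) ≤ (n:ℝ) := by exact_mod_cast hn
      linarith
    field_simp
    ring
  have hw : Tendsto (fun n : ℕ => (2*(n:ℝ) - 1)/((n:ℝ) - 1)) atTop (nhds 2) := by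
    have h2 : Tendsto (fun n : ℕ => 2 + ((n:ℝ)-1)⁻¹) atTop (nhds (2 + 0)) :=
      tendsto_const_nhds.add hinv1
    rw [add_zero] at h2
    refine h2.congr' ?_
    filter_upwards [eventually_ge_atTop 2] with n hn
    have h1 : (n:ℝ) - 1 ≠ 0 := by
      have : (2:ℝ) ≤ (n:ℝ) := by exact_mod_cast hn
      linarith
    field_simp
    ring
  have hT1 : Tendsto (fun n : ℕ =>
      (2/3) * (((r n:ℝ)^2 - r n)/n) * (((n:ℝ)-2)/((n:ℝ)-1))) atTop (nhds ((2/3)*t^2)) := by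
    have := (hu.const_mul (2/3)).mul hv
    rw [mul_one] at this
    exact this
  have hT2 : Tendsto (fun n : ℕ =>
      (2/3) * (((r n:ℝ)^2 - r n)/n) * (((n:ℝ)-2)/((n:ℝ)-1))
        + (1/3) * (((r n:ℝ)^2 - r n)/n) * ((2*(n:ℝ)-1)/((n:ℝ)-1))) atTop
      (nhds ((4/3)*t^2)) := by
    have h3 := hT1.add ((hu.const_mul (1/3)).mul hw)
    rw [show (2/3)*t^2 + 1/3*t^2*2 = (4/3)*t^2 by ring] at h3
    exact h3
  constructor
  · refine hT1.congr' ?_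
    filter_upwards [eventually_ge_atTop 2, hr2] with n hn hrn
    exact (exp_formula1 hn hrn).symm
  · refine hT2.congr' ?_
    filter_upwards [eventually_ge_atTop 2, hr2] with n hn hrn
    exact (exp_formula2 hn hrn).symm
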